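/- Consider a call Adversary(C, I, ℓ) of the adversary strategy at recursion depth ℓ, set c_ℓ = 4dw − (ℓ_0 − ℓ), and let C̃_0 = C and C̃_{i+1} = Adversary(C_i, I_i, ℓ+1) be its recursive call data. If for some i ∈ [d−1] the configuration C̃_i \ C has a c_ℓ-buffer in I, the configuration C̃_i \ C_{i−1} has a c_{ℓ+1}-buffer in I_{i−1}, and the configuration C̃_{i+1} \ C_i has a c_{ℓ+1}-buffer in I_i, then C̃_{i+1} \ C has a c_ℓ-buffer in I. -/

import Mathlib

namespace Paper


/-! ### Bracket symbols, partial states, and the bracket axioms (A1)-(A4) -/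

inductive BType : Type
  | trivR | trivB | openR | openB | closeR | closeB
  deriving DecidableEq

structure Sym (n : ℕ) where
  b : BType
  p : Fin n
  deriving DecidableEq

/-- Partial assignment of bracket symbols to positions (`none` = `*`). -/
abbrev PState (n : ℕ) := Fin n → Option (Sym n)

/-- Positions `i` and `j` are paired (pointers point at each other). -/
def Paired {n : ℕ} (ρ : PState n) (i j : Fin n) : Prop :=
  ∃ σ τ : Sym n, ρ i = some σ ∧ ρ j = some τ ∧ σ.p = j ∧ τ.p = i

/-- Axiom (A1) is falsified: start/end of string condition fails on assigned entries. -/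
def ViolA1 {n : ℕ} (ρ : PState n) : Prop :=
  (∃ i : Fin n, (i : ℕ) = 0 ∧ ∃ σ, ρ i = some σ ∧ ¬(σ.b = BType.trivR ∨ σ.b = BType.openR)) ∨
  (∃ i : Fin n, (i : ℕ) = n - 1 ∧ ∃ σ, ρ i = some σ ∧ ¬(σ.b = BType.trivB ∨ σ.b = BType.closeB))

/-- Axiom (A2) is falsified: pointers fail to define colour-matched bracket pairs. -/
def ViolA2 {n : ℕ} (ρ : PState n) : Prop :=
  (∃ i j : Fin n, ∃ σ τ : Sym n, ρ i = some σ ∧ ρ j = some τ ∧ σ.p = j ∧ τ.p ≠ i) ∨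
  (∃ i : Fin n, ∃ σ : Sym n, ρ i = some σ ∧ σ.p = i ∧
    ¬(σ.b = BType.trivR ∨ σ.b = BType.trivB)) ∨
  (∃ i j : Fin n, ∃ σ τ : Sym n, i < j ∧ ρ i = some σ ∧ ρ j = some τ ∧ σ.p = j ∧ τ.p = i ∧
    ¬((σ.b = BType.openR ∧ τ.b = BType.closeR) ∨ (σ.b = BType.openB ∧ τ.b = BType.closeB)))

/-- Axiom (A3) is falsified: two pairs are incorrectly nested. -/
def ViolA3 {n : ℕ} (ρ : PState n) : Prop :=
  ∃ i i' j j' : Fin n, Paired ρ i j ∧ Paired ρ i' j' ∧ i < i' ∧ i' < j ∧ j < j'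

/-- Axiom (A4) is falsified: a red-to-blue transition occurs at consecutive indices. -/
def ViolA4 {n : ℕ} (ρ : PState n) : Prop :=
  ∃ i j : Fin n, (j : ℕ) = (i : ℕ) + 1 ∧ ∃ σ τ : Sym n, ρ i = some σ ∧ ρ j = some τ ∧
    (σ.b = BType.closeR ∨ σ.b = BType.trivR) ∧ (τ.b = BType.openB ∨ τ.b = BType.trivB)

/-- The partial state falsifies one of the axioms (A1)-(A4). -/
def Falsifies {n : ℕ} (ρ : PState n) : Prop := ViolA1 ρ ∨ ViolA2 ρ ∨ ViolA3 ρ ∨ ViolA4 ρ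

/-- A partial assignment is consistent if it falsifies no axiom. -/
def ConsistentPS {n : ℕ} (ρ : PState n) : Prop := ¬ Falsifies ρ


/-! ### The prover-adversary game for the bracket axioms -/

inductive PMove (n : ℕ) : Type
  | query (i : Fin n)
  | forget (S : Finset (Fin n))

/-- A history of the game: each round records the prover's move and,
for a query, the adversary's answer. -/
abbrev Hist (n : ℕ) := List (PMove n × Option (Sym n))

def stepState {n : ℕ} (ρ : PState n) : PMove n × Option (Sym n) → PState n
  | (PMove.query i, some σ) => Function.update ρ i (some σ)
  | (PMove.query _, none) => ρ
  | (PMove.forget S, _) => fun j => if j ∈ S then none else ρ j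

/-- The game state after a given history (initially everything is `*`). -/
def stateOf {n : ℕ} (h : Hist n) : PState n := h.foldl stepState (fun _ => none)

/-- A (history-dependent) prover strategy. -/
abbrev ProverStrat (n : ℕ) := Hist n → PMove n

/-- A (history-dependent) adversary strategy: answers queried indices with symbols. -/
abbrev AdvStrat (n : ℕ) := Hist n → Fin n → Sym n

/-- The history of the play between a prover and an adversary after `t` rounds. -/
def play {n : ℕ} (P : ProverStrat n) (A : AdvStrat n) : ℕ → Hist n
  | 0 => []
  | t + 1 =>
    let h := play P A t
    match P h with
    | PMove.query i => h ++ [(PMove.query i, some (A h i))]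
    | PMove.forget S => h ++ [(PMove.forget S, none)]

/-- Memory size of a state: the number of assigned (non-`*`) entries. -/
noncomputable def memSize {n : ℕ} (ρ : PState n) : ℕ := {i : Fin n | ρ i ≠ none}.ncard


/-! ### Configurations, areas and containers -/

/-- An interval of positions, given by its two endpoints. -/
abbrev Ival (n : ℕ) := Fin n × Fin n

def ivSet {n : ℕ} (I : Ival n) : Set (Fin n) := Set.Icc I.1 I.2

noncomputable def ivLen {n : ℕ} (I : Ival n) : ℕ := (ivSet I).ncard

/-- The area of a bracket pair: the indices it encloses. -/
def areaP {n : ℕ} (P : Ival n) : Set (Fin n) := Set.Icc P.1 P.2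

/-- `P` is a bracket pair of `C`. -/
def PairOf {n : ℕ} (C : PState n) (P : Ival n) : Prop := P.1 ≤ P.2 ∧ Paired C P.1 P.2

/-- The area of a configuration: all indices covered by some of its bracket pairs. -/
def areaC {n : ℕ} (C : PState n) : Set (Fin n) := {x | ∃ P, PairOf C P ∧ x ∈ areaP P}

/-- A configuration: a consistent partial assignment consisting of bracket pairs. -/
def IsConfig {n : ℕ} (C : PState n) : Prop :=
  ConsistentPS C ∧ ∀ i σ, C i = some σ → C σ.p ≠ none

/-- A configuration is closed if it assigns all covered indices. -/
def IsClosedC {n : ℕ} (C : PState n) : Prop := ∀ x ∈ areaC C, C x ≠ none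

/-- `C'` extends `C`. -/
def ExtendsPS {n : ℕ} (C C' : PState n) : Prop := ∀ i σ, C i = some σ → C' i = some σ

/-- A configuration is locally consistent if some closed configuration extends it. -/
def LocallyConsistent {n : ℕ} (C : PState n) : Prop :=
  ∃ C', IsConfig C' ∧ IsClosedC C' ∧ ExtendsPS C C'

/-- The support of a partial assignment. -/
def suppS {n : ℕ} (τ : PState n) : Set (Fin n) := {i | τ i ≠ none}

/-- `C` dominates `τ`: the support of `τ` is covered by `C` and some closed
configuration extends both `C` and `τ`. -/
def Dominates {n : ℕ} (C τ : PState n) : Prop :=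
  suppS τ ⊆ areaC C ∧ ∃ C', IsConfig C' ∧ IsClosedC C' ∧ ExtendsPS C C' ∧ ExtendsPS τ C'

/-- A top-level bracket pair of `C`. -/
def TopLevel {n : ℕ} (C : PState n) (P : Ival n) : Prop :=
  PairOf C P ∧ ∀ P', PairOf C P' → P' ≠ P → ¬ areaP P ⊆ areaP P'

/-- The pair `P` is red (its left bracket is a red symbol). -/
def RedPair {n : ℕ} (C : PState n) (P : Ival n) : Prop :=
  ∃ σ, C P.1 = some σ ∧ (σ.b = BType.trivR ∨ σ.b = BType.openR)

/-- The pair `P` is blue. -/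
def BluePair {n : ℕ} (C : PState n) (P : Ival n) : Prop :=
  ∃ σ, C P.1 = some σ ∧ (σ.b = BType.trivB ∨ σ.b = BType.openB)

/-- A monotone configuration: all red top-level pairs lie before some index,
all blue top-level pairs after it. -/
def MonoConfig {n : ℕ} (C : PState n) : Prop :=
  ∃ t : ℕ, (∀ P, TopLevel C P → RedPair C P → (P.2 : ℕ) < t) ∧
           (∀ P, TopLevel C P → BluePair C P → t < (P.1 : ℕ))

/-- Remove a bracket pair from a configuration. -/
def removePair {n : ℕ} (C : PState n) (P : Ival n) : PState n :=
  fun i => if i = P.1 ∨ i = P.2 then none else C i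

/-- `C` is a container of `τ`: a locally consistent monotone configuration dominating
`τ`, minimal with this property. -/
def IsContainer {n : ℕ} (C τ : PState n) : Prop :=
  IsConfig C ∧ LocallyConsistent C ∧ MonoConfig C ∧ Dominates C τ ∧
    ∀ P, PairOf C P → ¬ Dominates (removePair C P) τ


/-! ### The adversary strategy: Move, PlayRound and successful runs -/

/-- The bracket pairs replaced by `Move(C, I)`: red pairs to the right of `I` and
blue pairs to the left of `I`. -/
def Repl {n : ℕ} (C : PState n) (I : Ival n) : Set (Ival n) :=
  {P | PairOf C P ∧ ((RedPair C P ∧ (I.2 : ℕ) < (P.1 : ℕ)) ∨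
                     (BluePair C P ∧ (P.2 : ℕ) < (I.1 : ℕ)))}

/-- The area of the minimal bracket pair strictly containing `P`. -/
def extArea {n : ℕ} (P : Ival n) : Set (Fin n) :=
  {x | (P.1 : ℕ) - 1 ≤ (x : ℕ) ∧ (x : ℕ) ≤ (P.2 : ℕ) + 1}

def Endpts {n : ℕ} (S : Set (Ival n)) : Set (Fin n) := {x | ∃ P ∈ S, x = P.1 ∨ x = P.2}

/-- Specification of `C' = Move(C, I)`: each replaced pair is covered by a minimal pair
of the opposite colour, overlapping replacements being merged (`g` maps each replaced
pair to the resulting new pair), everything else is unchanged. -/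
def MoveSpec {n : ℕ} (C : PState n) (I : Ival n) (C' : PState n) : Prop :=
  ∃ (New : Set (Ival n)) (g : Ival n → Ival n),
    (∀ P ∈ Repl C I, g P ∈ New) ∧
    (∀ Q ∈ New, ∃ P ∈ Repl C I, g P = Q) ∧
    (∀ Q ∈ New, areaP Q = {x | ∃ P ∈ Repl C I, g P = Q ∧ x ∈ extArea P}) ∧
    (∀ Q ∈ New, ∀ Q' ∈ New, Q ≠ Q' → areaP Q ∩ areaP Q' = ∅) ∧
    (∀ P, PairOf C' P ↔ ((PairOf C P ∧ P ∉ Repl C I) ∨ P ∈ New)) ∧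
    (∀ i : Fin n, i ∉ Endpts (Repl C I) → i ∉ Endpts New → C' i = C i) ∧
    (∀ i ∈ Endpts (Repl C I), i ∉ Endpts New → C' i = none) ∧
    (∀ Q ∈ New, ∀ P ∈ Repl C I, g P = Q →
      (RedPair C P →
        C' Q.1 = some ⟨BType.openB, Q.2⟩ ∧ C' Q.2 = some ⟨BType.closeB, Q.1⟩) ∧
      (BluePair C P →
        C' Q.1 = some ⟨BType.openR, Q.2⟩ ∧ C' Q.2 = some ⟨BType.closeR, Q.1⟩))

/-- No index of the interval `I` is covered by `C`. -/
def FreeIn {n : ℕ} (C : PState n) (I : Ival n) : Prop := ∀ x ∈ ivSet I, x ∉ areaC C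

/-- `I` is a largest subinterval of `J` containing no index covered by `C`. -/
def LargestFree {n : ℕ} (C : PState n) (J I : Ival n) : Prop :=
  ivSet I ⊆ ivSet J ∧ FreeIn C I ∧
    ∀ I', ivSet I' ⊆ ivSet J → FreeIn C I' → ivLen I' ≤ ivLen I

/-- Specification of one round of the game played by the adversary (`PlayRound`),
against a prover whose memory is bounded by `w`. -/
def PlayRoundSpec {n : ℕ} (w : ℕ) (C : PState n) (I : Ival n) (ρ C' ρ' : PState n) : Prop :=
  memSize ρ' ≤ w ∧
  ((∃ S : Finset (Fin n),
      ρ' = (fun j => if j ∈ S then none else ρ j) ∧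
      (∀ i, C' i = C i ∨ C' i = none) ∧ IsConfig C' ∧ Dominates C' ρ' ∧
      (∀ P, PairOf C' P → ¬ Dominates (removePair C' P) ρ')) ∨
   (∃ i σ, i ∈ areaC C ∧
      (∃ Cc, IsConfig Cc ∧ IsClosedC Cc ∧ ExtendsPS C Cc ∧ ExtendsPS ρ Cc ∧ Cc i = some σ) ∧
      ρ' = Function.update ρ i (some σ) ∧ C' = C) ∨
   (∃ i : Fin n, i ∉ areaC C ∧
      ((2 * (i : ℕ) < (I.1 : ℕ) + (I.2 : ℕ) ∧
        ρ' = Function.update ρ i (some ⟨BType.trivR, i⟩) ∧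
        C' = Function.update C i (some ⟨BType.trivR, i⟩)) ∨
       ((I.1 : ℕ) + (I.2 : ℕ) ≤ 2 * (i : ℕ) ∧
        ρ' = Function.update ρ i (some ⟨BType.trivB, i⟩) ∧
        C' = Function.update C i (some ⟨BType.trivB, i⟩)))))

/-- A successful (non-failing) run of `Adversary(C, I, ℓ)` transforming the game state
`ρ` into `ρ'` and returning the configuration `C'`.  At depth `ℓ₀` it plays one round
of the game; at smaller depth it iterates `d` times: choose a largest free interval,
apply `Move`, choose a largest free subinterval, and recurse. -/
inductive AdvRun (n w ℓ₀ d : ℕ) :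
    ℕ → PState n → Ival n → PState n → PState n → PState n → Prop
  | base (C : PState n) (I : Ival n) (ρ C' ρ' : PState n) :
      n ≤ ivLen I * (4 * w) ^ ℓ₀ →
      PlayRoundSpec w C I ρ C' ρ' →
      AdvRun n w ℓ₀ d ℓ₀ C I ρ C' ρ'
  | step (ℓ : ℕ) (C : PState n) (I : Ival n) (ρ : PState n)
      (Ct Cm ρt : ℕ → PState n) (It Iv : ℕ → Ival n) :
      ℓ < ℓ₀ →
      n ≤ ivLen I * (4 * w) ^ ℓ →
      Ct 0 = C → ρt 0 = ρ →
      (∀ i, i < d → LargestFree (Ct i) I (It i)) →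
      (∀ i, i < d → MoveSpec (Ct i) (It i) (Cm i)) →
      (∀ i, i < d → LargestFree (Cm i) (It i) (Iv i)) →
      (∀ i, i < d → AdvRun n w ℓ₀ d (ℓ + 1) (Cm i) (Iv i) (ρt i) (Ct (i + 1)) (ρt (i + 1))) →
      AdvRun n w ℓ₀ d ℓ C I ρ (Ct d) (ρt d)

/-- The recursive call data of a (non-failing) call `Adversary(C, I, ℓ)` at recursion
depth `ℓ < ℓ₀`: the sequences `C̃_i = Ct i`, `C_i = Cm i`, `Ĩ_i = It i`, `I_i = Iv i`
and game states `ρt i`, related as in the adversary strategy. -/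
def CallData (n w ℓ₀ d ℓ : ℕ) (C : PState n) (I : Ival n) (ρ : PState n)
    (Ct Cm ρt : ℕ → PState n) (It Iv : ℕ → Ival n) : Prop :=
  ℓ < ℓ₀ ∧ n ≤ ivLen I * (4 * w) ^ ℓ ∧ Ct 0 = C ∧ ρt 0 = ρ ∧
  (∀ i, i < d → LargestFree (Ct i) I (It i)) ∧
  (∀ i, i < d → MoveSpec (Ct i) (It i) (Cm i)) ∧
  (∀ i, i < d → LargestFree (Cm i) (It i) (Iv i)) ∧
  (∀ i, i < d → AdvRun n w ℓ₀ d (ℓ + 1) (Cm i) (Iv i) (ρt i) (Ct (i + 1)) (ρt (i + 1)))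


/-- The configuration consisting of the pairs of `C1` not present in `C2` has an
`s`-buffer in the interval `I = [a, b]`: every such pair contained in `[1, a+s]` is a
trivial red pair, and every such pair contained in `[b-s, n]` is a trivial blue pair. -/
def DiffBuffer {n : ℕ} (C1 C2 : PState n) (s : ℕ) (I : Ival n) : Prop :=
  ∀ P : Ival n, PairOf C1 P → ¬(C2 P.1 = C1 P.1 ∧ C2 P.2 = C1 P.2) →
    ((P.2 : ℕ) ≤ (I.1 : ℕ) + s → P.1 = P.2 ∧ C1 P.1 = some ⟨BType.trivR, P.1⟩) ∧
    ((I.2 : ℕ) ≤ (P.1 : ℕ) + s → P.1 = P.2 ∧ C1 P.1 = some ⟨BType.trivB, P.1⟩)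


-- auxiliary lemmas for buffer_lemma

lemma pairOf_eq {n : ℕ} {ρ : PState n} {P Q : Ival n}
    (hP : PairOf ρ P) (hQ : PairOf ρ Q)
    (h : P.1 = Q.1 ∨ P.1 = Q.2 ∨ P.2 = Q.1 ∨ P.2 = Q.2) : P = Q := by
  obtain ⟨hle, σ, τ, h1, h2, h3, h4⟩ := hP
  obtain ⟨hle', σ', τ', h1', h2', h3', h4'⟩ := hQ
  rcases h with h | h | h | h
  · rw [h, h1'] at h1
    injection h1 with e
    have e2 : P.2 = Q.2 := by rw [← h3, ← e, h3']
    exact Prod.ext h e2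
  · rw [h, h2'] at h1
    injection h1 with e
    have e2 : P.2 = Q.1 := by rw [← h3, ← e, h4']
    have e3 : P.1 = Q.1 := le_antisymm (e2 ▸ hle) (h ▸ hle')
    have e4 : P.2 = Q.2 := by rw [e2, ← e3, h]
    exact Prod.ext e3 e4
  · rw [h, h1'] at h2
    injection h2 with e
    have e2 : P.1 = Q.2 := by rw [← h4, ← e, h3']
    have e3 : P.1 = Q.1 := le_antisymm (h ▸ hle) (e2 ▸ hle')
    have e4 : P.2 = Q.2 := by rw [h, e3.symm, e2]
    exact Prod.ext e3 e4
  · rw [h, h2'] at h2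
    injection h2 with e
    have e2 : P.1 = Q.1 := by rw [← h4, ← e, h4']
    exact Prod.ext e2 h

lemma pairOf_of_eq_vals {n : ℕ} {ρ ρ' : PState n} {P : Ival n}
    (hP : PairOf ρ P) (h1 : ρ' P.1 = ρ P.1) (h2 : ρ' P.2 = ρ P.2) : PairOf ρ' P := by
  obtain ⟨hle, σ, τ, e1, e2, e3, e4⟩ := hP
  exact ⟨hle, σ, τ, by rw [h1, e1], by rw [h2, e2], e3, e4⟩

lemma advRun_len {n w ℓ₀ d ℓ' : ℕ} {C : PState n} {I : Ival n} {ρ C' ρ' : PState n}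
    (h : AdvRun n w ℓ₀ d ℓ' C I ρ C' ρ') (hw : 1 ≤ w) :
    n ≤ ivLen I * (4 * w) ^ ℓ₀ := by
  cases h with
  | base _ _ _ _ _ hb _ => exact hb
  | step _ _ _ _ _ _ _ _ _ hℓ hb _ _ _ _ _ _ =>
    calc n ≤ ivLen I * (4 * w) ^ _ := hb
    _ ≤ ivLen I * (4 * w) ^ ℓ₀ :=
      Nat.mul_le_mul_left _ (Nat.pow_le_pow_right (by omega) (by omega))

lemma interval_facts {n : ℕ} {Ca Cb : PState n} {I Itj Ivj : Ival n} {c : ℕ}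
    (h1 : LargestFree Ca I Itj) (h2 : LargestFree Cb Itj Ivj)
    (hlen : c + 2 ≤ ivLen Ivj) :
    (I.1 : ℕ) ≤ (Ivj.1 : ℕ) ∧ (Ivj.2 : ℕ) ≤ (I.2 : ℕ) ∧
    (I.1 : ℕ) + c + 1 ≤ (Itj.2 : ℕ) ∧ (Itj.1 : ℕ) + c + 1 ≤ (I.2 : ℕ) := by
  have hcard : ivLen Ivj = (Ivj.2 : ℕ) + 1 - (Ivj.1 : ℕ) := by
    rw [ivLen, ivSet, ← Finset.coe_Icc, Set.ncard_coe_finset, Fin.card_Icc]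
  have hne : (ivSet Ivj).Nonempty := Set.nonempty_of_ncard_ne_zero (by rw [ivLen] at hlen; omega)
  have hab : Ivj.1 ≤ Ivj.2 := Set.nonempty_Icc.mp hne
  have hab' : (Ivj.1 : ℕ) ≤ (Ivj.2 : ℕ) := hab
  have m1 : Ivj.1 ∈ ivSet Ivj := Set.mem_Icc.mpr ⟨le_refl _, hab⟩
  have m2 : Ivj.2 ∈ ivSet Ivj := Set.mem_Icc.mpr ⟨hab, le_refl _⟩
  have m1t := Set.mem_Icc.mp (h2.1 m1)
  have m2t := Set.mem_Icc.mp (h2.1 m2)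
  have m1I := Set.mem_Icc.mp (h1.1 (h2.1 m1))
  have m2I := Set.mem_Icc.mp (h1.1 (h2.1 m2))
  have q1 : (Itj.1 : ℕ) ≤ (Ivj.1 : ℕ) := m1t.1
  have q2 : (Ivj.2 : ℕ) ≤ (Itj.2 : ℕ) := m2t.2
  have q3 : (I.1 : ℕ) ≤ (Ivj.1 : ℕ) := m1I.1
  have q4 : (Ivj.2 : ℕ) ≤ (I.2 : ℕ) := m2I.2
  omega

lemma key_numeric {n w ℓ₀ d : ℕ} (hn : 36 ≤ n) (hw : 2 ≤ w)
    (hℓ₀ : ℓ₀ = ⌊(1 / 10 : ℝ) * Real.log n / Real.log w⌋₊)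
    (hd : d = ⌊(n : ℝ) ^ (1 / 10 : ℝ)⌋₊)
    (hpos : 1 ≤ ℓ₀) :
    (4 * d * w + 2) * (4 * w) ^ ℓ₀ ≤ n := by
  have hx0 : (0 : ℝ) < n := by positivity
  have hx1 : (1 : ℝ) ≤ n := by exact_mod_cast le_trans (by norm_num) hn
  have hL : 0 ≤ Real.log n := Real.log_nonneg hx1
  have hw1 : (1 : ℝ) < (w : ℝ) := by exact_mod_cast hw
  have hw0 : (0 : ℝ) < (w : ℝ) := by linarith
  have hlogw : 0 < Real.log w := Real.log_pos hw1
  have hfl : (1 : ℝ) ≤ (1 / 10 : ℝ) * Real.log n / Real.log w := by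
    have h' : 0 < ⌊(1 / 10 : ℝ) * Real.log n / Real.log w⌋₊ := by rw [← hℓ₀]; omega
    exact Nat.floor_pos.mp h'
  have hwL : Real.log w ≤ (1 / 10 : ℝ) * Real.log n := (one_le_div hlogw).mp hfl
  have hfloorle : (ℓ₀ : ℝ) ≤ (1 / 10 : ℝ) * Real.log n / Real.log w := by
    rw [hℓ₀]; exact Nat.floor_le (le_trans (by norm_num) hfl)
  have hlpow : (ℓ₀ : ℝ) * Real.log w ≤ (1 / 10 : ℝ) * Real.log n := by
    calc (ℓ₀ : ℝ) * Real.log w ≤ ((1 / 10 : ℝ) * Real.log n / Real.log w) * Real.log w :=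
          mul_le_mul_of_nonneg_right hfloorle hlogw.le
    _ = (1 / 10 : ℝ) * Real.log n := div_mul_cancel₀ _ hlogw.ne'
  set E := Real.exp ((1 / 10 : ℝ) * Real.log n) with hE
  have hE1 : 1 ≤ E := Real.one_le_exp (by positivity)
  have hwE : (w : ℝ) ≤ E := by
    calc (w : ℝ) = Real.exp (Real.log w) := (Real.exp_log hw0).symm
    _ ≤ E := Real.exp_le_exp.mpr (by linarith)
  have hwpowE : (w : ℝ) ^ ℓ₀ ≤ E := by
    calc (w : ℝ) ^ ℓ₀ = Real.exp (Real.log ((w : ℝ) ^ ℓ₀)) := (Real.exp_log (by positivity)).symm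
    _ ≤ E := by
        rw [Real.log_pow]
        exact Real.exp_le_exp.mpr hlpow
  have hdE : (d : ℝ) ≤ E := by
    rw [hd]
    calc ((⌊(n : ℝ) ^ (1 / 10 : ℝ)⌋₊ : ℕ) : ℝ) ≤ (n : ℝ) ^ (1 / 10 : ℝ) :=
          Nat.floor_le (by positivity)
    _ = E := by rw [Real.rpow_def_of_pos hx0, mul_comm]
  have h4wE : ((4 * w : ℕ) : ℝ) ^ ℓ₀ ≤ E ^ 3 := by
    have h1 : ((4 * w : ℕ) : ℝ) ≤ (w : ℝ) ^ 3 := by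
      have h2w : (2 : ℝ) ≤ (w : ℝ) := by exact_mod_cast hw
      have h4 : (4 : ℝ) ≤ (w : ℝ) * w := by nlinarith
      have h5 : 4 * (w : ℝ) ≤ ((w : ℝ) * w) * w := mul_le_mul_of_nonneg_right h4 hw0.le
      push_cast
      nlinarith [h5]
    calc ((4 * w : ℕ) : ℝ) ^ ℓ₀ ≤ ((w : ℝ) ^ 3) ^ ℓ₀ := pow_le_pow_left₀ (by positivity) h1 ℓ₀
    _ = ((w : ℝ) ^ ℓ₀) ^ 3 := by rw [← pow_mul, ← pow_mul, Nat.mul_comm]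
    _ ≤ E ^ 3 := pow_le_pow_left₀ (by positivity) hwpowE 3
  have hmain : ((4 * d * w + 2 : ℕ) : ℝ) * ((4 * w : ℕ) : ℝ) ^ ℓ₀ ≤ 6 * E ^ 5 := by
    have hstep : ((4 * d * w + 2 : ℕ) : ℝ) ≤ 6 * E ^ 2 := by
      push_cast
      nlinarith [hdE, hwE, hE1, mul_le_mul hdE hwE (by positivity) (by linarith)]
    calc ((4 * d * w + 2 : ℕ) : ℝ) * ((4 * w : ℕ) : ℝ) ^ ℓ₀ ≤ (6 * E ^ 2) * E ^ 3 :=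
          mul_le_mul hstep h4wE (by positivity) (by positivity)
    _ = 6 * E ^ 5 := by ring
  have hfin : 6 * E ^ 5 ≤ (n : ℝ) := by
    have hE5 : E ^ 5 = Real.exp (Real.log n / 2) := by
      rw [hE, ← Real.exp_nat_mul]
      congr 1
      push_cast
      ring
    have h6 : (6 : ℝ) ≤ Real.exp (Real.log n / 2) := by
      have h36 : Real.log 36 ≤ Real.log n := Real.log_le_log (by norm_num) (by exact_mod_cast hn)
      have h36' : Real.log 36 = 2 * Real.log 6 := by
        rw [show (36 : ℝ) = 6 ^ 2 by norm_num, Real.log_pow]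
        push_cast; ring
      calc (6 : ℝ) = Real.exp (Real.log 6) := (Real.exp_log (by norm_num)).symm
      _ ≤ Real.exp (Real.log n / 2) := Real.exp_le_exp.mpr (by linarith)
    have hxexp : Real.exp (Real.log n) = (n : ℝ) := Real.exp_log hx0
    calc 6 * E ^ 5 = 6 * Real.exp (Real.log n / 2) := by rw [hE5]
    _ ≤ Real.exp (Real.log n / 2) * Real.exp (Real.log n / 2) :=
        mul_le_mul_of_nonneg_right h6 (Real.exp_nonneg _)
    _ = Real.exp (Real.log n) := by rw [← Real.exp_add]; ring_nf
    _ = (n : ℝ) := hxexp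
  have : ((4 * d * w + 2 : ℕ) : ℝ) * ((4 * w : ℕ) : ℝ) ^ ℓ₀ ≤ (n : ℝ) := hmain.trans hfin
  exact_mod_cast this

lemma endpts_clean {n : ℕ} {Cprev Cmid : PState n} {Itp : Ival n}
    {New : Set (Ival n)}
    (hg5 : ∀ P, PairOf Cmid P ↔ ((PairOf Cprev P ∧ P ∉ Repl Cprev Itp) ∨ P ∈ New))
    {P : Ival n} (hPold : PairOf Cprev P) (hPmid : PairOf Cmid P)
    (hnr : P ∉ Repl Cprev Itp) (hNew : P ∉ New) :
    ∀ x : Fin n, (x = P.1 ∨ x = P.2) →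
      x ∉ Endpts (Repl Cprev Itp) ∧ x ∉ Endpts New := by
  intro x hx
  constructor
  · rintro ⟨P', hP', hx'⟩
    obtain ⟨hP'pair, hrest⟩ := hP'
    have hPP : P = P' := by
      apply pairOf_eq hPold hP'pair
      rcases hx with rfl | rfl <;> rcases hx' with h' | h' <;> tauto
    exact hnr (by rw [hPP]; exact ⟨hP'pair, hrest⟩)
  · rintro ⟨Q, hQ, hx'⟩
    have hQpair : PairOf Cmid Q := (hg5 Q).mpr (Or.inr hQ)
    have hPP : P = Q := by
      apply pairOf_eq hPmid hQpair
      rcases hx with rfl | rfl <;> rcases hx' with h' | h' <;> tauto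
    exact hNew (by rw [hPP]; exact hQ)

/-- A red pair of `Ccur` cannot lie within distance `c` of the right end of `I`,
given that `Ccur` arises (via the buffer hypothesis) from `Cmid = Move(Cprev, Itp)`. -/
lemma side_right {n : ℕ} {Cprev Cmid Ccur : PState n} {I Itp Ivp : Ival n} {c c' : ℕ}
    (hbuf : DiffBuffer Ccur Cmid c' Ivp)
    (hms : MoveSpec Cprev Itp Cmid)
    (hfree : FreeIn Cprev Itp)
    (hIv2 : (Ivp.2 : ℕ) ≤ (I.2 : ℕ))
    (hIt : (Itp.1 : ℕ) + c + 1 ≤ (I.2 : ℕ))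
    (hcc : c ≤ c')
    {P : Ival n} (hP : PairOf Ccur P)
    (hred : RedPair Ccur P)
    (hpos : (I.2 : ℕ) ≤ (P.1 : ℕ) + c) : False := by
  obtain ⟨σ, hσ, hσb⟩ := hred
  have hle : (P.1 : ℕ) ≤ (P.2 : ℕ) := Fin.le_def.mp hP.1
  by_cases hag : Cmid P.1 = Ccur P.1 ∧ Cmid P.2 = Ccur P.2
  · have hPmid : PairOf Cmid P := pairOf_of_eq_vals hP hag.1 hag.2
    obtain ⟨New, g, hg1, hg2, hg3, hg4, hg5, hg6, hg7, hg8⟩ := hms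
    by_cases hNew : P ∈ New
    · have hP2mem : P.2 ∈ areaP P := Set.mem_Icc.mpr ⟨hP.1, le_refl _⟩
      rw [hg3 P hNew] at hP2mem
      obtain ⟨P4, hP4r, hgP4, hext⟩ := hP2mem
      obtain ⟨hP4pair, hP4col⟩ := hP4r
      rcases hP4col with ⟨hP4red, hP4right⟩ | ⟨hP4blue, hP4left⟩
      · have hval := ((hg8 P hNew P4 ⟨hP4pair, Or.inl ⟨hP4red, hP4right⟩⟩ hgP4).1 hP4red).1
        rw [hag.1, hσ] at hval
        injection hval with hv
        rw [hv] at hσb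
        simp at hσb
      · have h1 : (P.2 : ℕ) ≤ (P4.2 : ℕ) + 1 := hext.2
        omega
    · rcases (hg5 P).mp hPmid with ⟨hPold, hnr⟩ | hin
      · have hep := endpts_clean hg5 hPold hPmid hnr hNew
        have hv1 : Cmid P.1 = Cprev P.1 :=
          hg6 P.1 (hep P.1 (Or.inl rfl)).1 (hep P.1 (Or.inl rfl)).2
        have hredprev : RedPair Cprev P := ⟨σ, by rw [← hv1, hag.1]; exact hσ, hσb⟩
        have hnlt : ¬ ((Itp.2 : ℕ) < (P.1 : ℕ)) :=
          fun hlt => hnr ⟨hPold, Or.inl ⟨hredprev, hlt⟩⟩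
        have hmemarea : P.1 ∈ areaC Cprev := ⟨P, hPold, Set.mem_Icc.mpr ⟨le_refl _, hP.1⟩⟩
        have hnotin : P.1 ∉ ivSet Itp := fun hm => hfree P.1 hm hmemarea
        rw [ivSet, Set.mem_Icc] at hnotin
        push_neg at hnotin
        have h1 : (P.1 : ℕ) < (Itp.1 : ℕ) := by
          by_contra hcon
          push_neg at hcon
          have h2' := hnotin (Fin.le_def.mpr hcon)
          exact hnlt (Fin.lt_def.mp h2')
        omega
      · exact absurd hin hNew
  · have hcon := (hbuf P hP hag).2 (by omega)
    have h2' := hcon.2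
    rw [hσ] at h2'
    injection h2' with hv
    rw [hv] at hσb
    simp at hσb

/-- A blue pair of `Ccur` cannot lie within distance `c` of the left end of `I`. -/
lemma side_left {n : ℕ} {Cprev Cmid Ccur : PState n} {I Itp Ivp : Ival n} {c c' : ℕ}
    (hbuf : DiffBuffer Ccur Cmid c' Ivp)
    (hms : MoveSpec Cprev Itp Cmid)
    (hfree : FreeIn Cprev Itp)
    (hIv1 : (I.1 : ℕ) ≤ (Ivp.1 : ℕ))
    (hIt : (I.1 : ℕ) + c + 1 ≤ (Itp.2 : ℕ))
    (hcc : c ≤ c')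
    {P : Ival n} (hP : PairOf Ccur P)
    (hblue : BluePair Ccur P)
    (hpos : (P.2 : ℕ) ≤ (I.1 : ℕ) + c) : False := by
  obtain ⟨σ, hσ, hσb⟩ := hblue
  have hle : (P.1 : ℕ) ≤ (P.2 : ℕ) := Fin.le_def.mp hP.1
  by_cases hag : Cmid P.1 = Ccur P.1 ∧ Cmid P.2 = Ccur P.2
  · have hPmid : PairOf Cmid P := pairOf_of_eq_vals hP hag.1 hag.2
    obtain ⟨New, g, hg1, hg2, hg3, hg4, hg5, hg6, hg7, hg8⟩ := hms
    by_cases hNew : P ∈ New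
    · have hP1mem : P.1 ∈ areaP P := Set.mem_Icc.mpr ⟨le_refl _, hP.1⟩
      rw [hg3 P hNew] at hP1mem
      obtain ⟨P4, hP4r, hgP4, hext⟩ := hP1mem
      obtain ⟨hP4pair, hP4col⟩ := hP4r
      rcases hP4col with ⟨hP4red, hP4right⟩ | ⟨hP4blue, hP4left⟩
      · have h1 : (P4.1 : ℕ) - 1 ≤ (P.1 : ℕ) := hext.1
        omega
      · have hval := ((hg8 P hNew P4 ⟨hP4pair, Or.inr ⟨hP4blue, hP4left⟩⟩ hgP4).2 hP4blue).1
        rw [hag.1, hσ] at hval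
        injection hval with hv
        rw [hv] at hσb
        simp at hσb
    · rcases (hg5 P).mp hPmid with ⟨hPold, hnr⟩ | hin
      · have hep := endpts_clean hg5 hPold hPmid hnr hNew
        have hv1 : Cmid P.1 = Cprev P.1 :=
          hg6 P.1 (hep P.1 (Or.inl rfl)).1 (hep P.1 (Or.inl rfl)).2
        have hblueprev : BluePair Cprev P := ⟨σ, by rw [← hv1, hag.1]; exact hσ, hσb⟩
        have hnlt : ¬ ((P.2 : ℕ) < (Itp.1 : ℕ)) :=
          fun hlt => hnr ⟨hPold, Or.inr ⟨hblueprev, hlt⟩⟩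
        have hmemarea : P.2 ∈ areaC Cprev := ⟨P, hPold, Set.mem_Icc.mpr ⟨hP.1, le_refl _⟩⟩
        have hnotin : P.2 ∉ ivSet Itp := fun hm => hfree P.2 hm hmemarea
        rw [ivSet, Set.mem_Icc] at hnotin
        push_neg at hnotin
        have h1 : (Itp.2 : ℕ) < (P.2 : ℕ) := by
          have h2' := hnotin (Fin.le_def.mpr (by omega))
          exact Fin.lt_def.mp h2'
        omega
      · exact absurd hin hNew
  · have hcon := (hbuf P hP hag).1 (by omega)
    have h2' := hcon.2
    rw [hσ] at h2'
    injection h2' with hv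
    rw [hv] at hσb
    simp at hσb
/-- **Buffer Lemma.** With `c_ℓ = 4dw - (ℓ₀ - ℓ)`: if `C̃_i \ C` has a
`c_ℓ`-buffer in `I`, `C̃_i \ C_{i-1}` has a `c_{ℓ+1}`-buffer in `I_{i-1}`, and
`C̃_{i+1} \ C_i` has a `c_{ℓ+1}`-buffer in `I_i`, then `C̃_{i+1} \ C` has a
`c_ℓ`-buffer in `I`. -/
theorem buffer_lemma :
    ∃ ε : ℝ, 0 < ε ∧ ∃ N : ℕ, ∀ n ≥ N, ∀ w : ℕ, 2 ≤ w →
      ∀ ℓ₀ d : ℕ, ℓ₀ = ⌊ε * Real.log n / Real.log w⌋₊ → d = ⌊(n : ℝ) ^ ε⌋₊ →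
        ∀ (ℓ : ℕ) (C : PState n) (I : Ival n) (ρ : PState n)
          (Ct Cm ρt : ℕ → PState n) (It Iv : ℕ → Ival n),
          CallData n w ℓ₀ d ℓ C I ρ Ct Cm ρt It Iv →
          ∀ i : ℕ, 1 ≤ i → i ≤ d - 1 →
            DiffBuffer (Ct i) C (4 * d * w - (ℓ₀ - ℓ)) I →
            DiffBuffer (Ct i) (Cm (i - 1)) (4 * d * w - (ℓ₀ - (ℓ + 1))) (Iv (i - 1)) →
            DiffBuffer (Ct (i + 1)) (Cm i) (4 * d * w - (ℓ₀ - (ℓ + 1))) (Iv i) →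
            DiffBuffer (Ct (i + 1)) C (4 * d * w - (ℓ₀ - ℓ)) I := by
  refine ⟨1 / 10, by norm_num, 36, ?_⟩
  intro n hn w hw ℓ₀ d hℓ₀ hd ℓ C I ρ Ct Cm ρt It Iv hCD i hi1 hid h1 h2 h3
  obtain ⟨hℓ, -, -, -, hLF1, hMS, hLF2, hAR⟩ := hCD
  set c := 4 * d * w - (ℓ₀ - ℓ) with hc
  set c' := 4 * d * w - (ℓ₀ - (ℓ + 1)) with hc'
  have hiltd : i < d := by omega
  have hi1ltd : i - 1 < d := by omega
  have hnum : (4 * d * w + 2) * (4 * w) ^ ℓ₀ ≤ n := key_numeric hn hw hℓ₀ hd (by omega)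
  have hK : ∀ j, j < d → c + 2 ≤ ivLen (Iv j) := by
    intro j hj
    have hlen := advRun_len (hAR j hj) (by omega)
    have hpow : 0 < (4 * w) ^ ℓ₀ := Nat.pow_pos (by omega)
    have hle' : 4 * d * w + 2 ≤ ivLen (Iv j) :=
      Nat.le_of_mul_le_mul_right (hnum.trans hlen) hpow
    omega
  have hIF : ∀ j, j < d →
      (I.1 : ℕ) ≤ ((Iv j).1 : ℕ) ∧ ((Iv j).2 : ℕ) ≤ (I.2 : ℕ) ∧
      (I.1 : ℕ) + c + 1 ≤ ((It j).2 : ℕ) ∧ ((It j).1 : ℕ) + c + 1 ≤ (I.2 : ℕ) :=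
    fun j hj => interval_facts (hLF1 j hj) (hLF2 j hj) (hK j hj)
  have hcc : c ≤ c' := by omega
  obtain ⟨A1, B1, C1f, D1⟩ := hIF i hiltd
  obtain ⟨A0, B0, C0f, D0⟩ := hIF (i - 1) hi1ltd
  intro P hP hdiff
  have hle : (P.1 : ℕ) ≤ (P.2 : ℕ) := Fin.le_def.mp hP.1
  by_cases hag : Cm i P.1 = Ct (i + 1) P.1 ∧ Cm i P.2 = Ct (i + 1) P.2
  · have hPmid : PairOf (Cm i) P := pairOf_of_eq_vals hP hag.1 hag.2
    obtain ⟨New, g, hg1, hg2, hg3, hg4, hg5, hg6, hg7, hg8⟩ := hMS i hiltd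
    by_cases hNew : P ∈ New
    · constructor
      · intro hfr
        exfalso
        have hP2mem : P.2 ∈ areaP P := Set.mem_Icc.mpr ⟨hP.1, le_refl _⟩
        rw [hg3 P hNew] at hP2mem
        obtain ⟨P4, hP4r, hgP4, hext⟩ := hP2mem
        obtain ⟨hP4pair, hP4col⟩ := hP4r
        have hP4le : (P4.1 : ℕ) ≤ (P4.2 : ℕ) := Fin.le_def.mp hP4pair.1
        rcases hP4col with ⟨hP4red, hP4right⟩ | ⟨hP4blue, hP4left⟩
        · have h1' : (P4.1 : ℕ) - 1 ≤ (P.2 : ℕ) := hext.1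
          omega
        · have hmem2 : P4.2 ∈ areaP P := by
            rw [hg3 P hNew]
            exact ⟨P4, ⟨hP4pair, Or.inr ⟨hP4blue, hP4left⟩⟩, hgP4, by omega, by omega⟩
          have hb : (P4.2 : ℕ) ≤ (P.2 : ℕ) := Fin.le_def.mp (Set.mem_Icc.mp hmem2).2
          exact side_left h2 (hMS (i - 1) hi1ltd) (hLF1 (i - 1) hi1ltd).2.1 A0 C0f hcc
            hP4pair hP4blue (by omega)
      · intro hbk
        exfalso
        have hP1mem : P.1 ∈ areaP P := Set.mem_Icc.mpr ⟨le_refl _, hP.1⟩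
        rw [hg3 P hNew] at hP1mem
        obtain ⟨P4, hP4r, hgP4, hext⟩ := hP1mem
        obtain ⟨hP4pair, hP4col⟩ := hP4r
        have hP4le : (P4.1 : ℕ) ≤ (P4.2 : ℕ) := Fin.le_def.mp hP4pair.1
        rcases hP4col with ⟨hP4red, hP4right⟩ | ⟨hP4blue, hP4left⟩
        · have hmem2 : P4.1 ∈ areaP P := by
            rw [hg3 P hNew]
            exact ⟨P4, ⟨hP4pair, Or.inl ⟨hP4red, hP4right⟩⟩, hgP4, by omega, by omega⟩
          have hb : (P.1 : ℕ) ≤ (P4.1 : ℕ) := Fin.le_def.mp (Set.mem_Icc.mp hmem2).1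
          exact side_right h2 (hMS (i - 1) hi1ltd) (hLF1 (i - 1) hi1ltd).2.1 B0 D0 hcc
            hP4pair hP4red (by omega)
        · have h1' : (P.1 : ℕ) ≤ (P4.2 : ℕ) + 1 := hext.2
          omega
    · rcases (hg5 P).mp hPmid with ⟨hPold, hnr⟩ | hin
      · have hep := endpts_clean hg5 hPold hPmid hnr hNew
        have hv1 : Cm i P.1 = Ct i P.1 :=
          hg6 P.1 (hep P.1 (Or.inl rfl)).1 (hep P.1 (Or.inl rfl)).2
        have hv2 : Cm i P.2 = Ct i P.2 :=
          hg6 P.2 (hep P.2 (Or.inr rfl)).1 (hep P.2 (Or.inr rfl)).2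
        have e1 : Ct i P.1 = Ct (i + 1) P.1 := by rw [← hv1, hag.1]
        have e2 : Ct i P.2 = Ct (i + 1) P.2 := by rw [← hv2, hag.2]
        have hdiff' : ¬ (C P.1 = Ct i P.1 ∧ C P.2 = Ct i P.2) := by
          rw [e1, e2]; exact hdiff
        have hh := h1 P hPold hdiff'
        constructor
        · intro hfr
          obtain ⟨hq, hv⟩ := hh.1 hfr
          exact ⟨hq, by rw [← e1]; exact hv⟩
        · intro hbk
          obtain ⟨hq, hv⟩ := hh.2 hbk
          exact ⟨hq, by rw [← e1]; exact hv⟩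
      · exact absurd hin hNew
  · have hh := h3 P hP hag
    constructor
    · intro hfr
      exact hh.1 (by omega)
    · intro hbk
      exact hh.2 (by omega)

end Paper
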